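/- Let V: ℂ^{|A'|} → ℂ^{|A|} be an isometry (VᴴV = 1_{|A'|}), let V(·) := V·Vᴴ be the corresponding isometry channel with Choi state Φ^V = (1/|A'|)·vec(V)vec(V)ᴴ where vec(V) := ∑_i e_i ⊗ V e_i, and let γ be a positive definite state on ℂ^{|A|}. Then the max-relative entropy between the Choi state of V and the Choi state π_{A'} ⊗ γ of the absolutely thermal channel T(X) := tr(X)γ equals D_∞(Φ^V ‖ π_{A'} ⊗ γ) = log tr(γ⁻¹ V Vᴴ), where π_{A'} := 1_{|A'|}/|A'|. -/

import Mathlib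

open scoped ComplexOrder Kronecker
open Matrix

noncomputable section

/-- Square complex matrices indexed by `ι`. -/
abbrev Mat (ι : Type) : Type := Matrix ι ι ℂ

/-- A quantum state: a positive semidefinite matrix of trace one. -/
def IsState {ι : Type} [Fintype ι] (ρ : Mat ι) : Prop :=
  ρ.PosSemidef ∧ ρ.trace = 1

/-- Max-relative entropy `D_∞(ρ‖σ) = log₂ inf {λ ≥ 0 : λ•σ − ρ ⪰ 0}` as an extended real;
it is `+∞` (`sInf ∅ = ⊤`) when no such `λ` exists. -/
def Dmax {ι : Type} [Fintype ι] (ρ σ : Mat ι) : EReal :=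
  sInf {x : EReal | ∃ l : ℝ, 0 ≤ l ∧ ((l : ℂ) • σ - ρ).PosSemidef ∧
    x = ((Real.logb 2 l : ℝ) : EReal)}

/-- Partial trace over the first tensor factor. -/
def trFst {ιA ιB : Type} [Fintype ιA] (ρ : Matrix (ιA × ιB) (ιA × ιB) ℂ) : Mat ιB :=
  Matrix.of fun i j => ∑ k : ιA, ρ (k, i) (k, j)

/-- Partial trace over the second tensor factor. -/
def trSnd {ιA ιB : Type} [Fintype ιB] (ρ : Matrix (ιA × ιB) (ιA × ιB) ℂ) : Mat ιA :=
  Matrix.of fun i j => ∑ k : ιB, ρ (i, k) (j, k)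

/-- Conditional min-entropy `S_∞(A|B)_ρ := −inf over states σ on B of D_∞(ρ‖1_A⊗σ)`. -/
def condMin {ιA ιB : Type} [Fintype ιA] [DecidableEq ιA] [Fintype ιB]
    (ρ : Matrix (ιA × ιB) (ιA × ιB) ℂ) : EReal :=
  -(⨅ σ : {σ : Mat ιB // IsState σ}, Dmax ρ ((1 : Mat ιA) ⊗ₖ σ.1))

/-- `S↓_∞(A|B)_ρ := −D_∞(ρ‖1_A⊗ρ_B)` with `ρ_B = tr_A ρ`. -/
def condMinDown {ιA ιB : Type} [Fintype ιA] [DecidableEq ιA] [Fintype ιB]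
    (ρ : Matrix (ιA × ιB) (ιA × ιB) ℂ) : EReal :=
  -(Dmax ρ ((1 : Mat ιA) ⊗ₖ trFst ρ))

/-- The (unnormalized) Choi matrix of a linear map of matrices. -/
def choiMatrix {ι κ : Type} [DecidableEq ι] (L : Mat ι →ₗ[ℂ] Mat κ) :
    Matrix (ι × κ) (ι × κ) ℂ :=
  Matrix.of fun p q => L (Matrix.single p.1 q.1 1) p.2 q.2

/-- A quantum channel: a linear map that is completely positive (positive semidefinite Choi
matrix) and trace preserving. -/
def IsChannel {ι κ : Type} [Fintype ι] [DecidableEq ι] [Fintype κ]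
    (L : Mat ι →ₗ[ℂ] Mat κ) : Prop :=
  (choiMatrix L).PosSemidef ∧ ∀ X : Mat ι, (L X).trace = X.trace

/-- The Choi state `Φ^L = (id⊗L)(Φ_d)` of a linear map of matrices. -/
def choiState {ι κ : Type} [Fintype ι] [DecidableEq ι] (L : Mat ι →ₗ[ℂ] Mat κ) :
    Matrix (ι × κ) (ι × κ) ℂ :=
  ((Fintype.card ι : ℂ))⁻¹ • choiMatrix L

/-- The Choi state of a bipartite channel `N : A'B' → AB`, re-indexed across
the cut `R_A A : R_B B`. -/
def biChoiState {ιA' ιB' κA κB : Type} [Fintype ιA'] [DecidableEq ιA']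
    [Fintype ιB'] [DecidableEq ιB'] (N : Mat (ιA' × ιB') →ₗ[ℂ] Mat (κA × κB)) :
    Matrix ((ιA' × κA) × (ιB' × κB)) ((ιA' × κA) × (ιB' × κB)) ℂ :=
  Matrix.of fun p q =>
    choiState N ((p.1.1, p.2.1), (p.1.2, p.2.2)) ((q.1.1, q.2.1), (q.1.2, q.2.2))

/-- Conditional min-entropy of a bipartite channel:
`S_∞[A|B]_N := −inf over channels Q : B'→B of D_∞(Φ^N ‖ 1_{R_A A} ⊗ Φ^Q) − log₂|A'|`. -/
def chanCondMin {ιA' ιB' κA κB : Type}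
    [Fintype ιA'] [DecidableEq ιA'] [Fintype ιB'] [DecidableEq ιB']
    [Fintype κA] [DecidableEq κA] [Fintype κB] [DecidableEq κB]
    (N : Mat (ιA' × ιB') →ₗ[ℂ] Mat (κA × κB)) : EReal :=
  (-(⨅ Q : {Q : Mat ιB' →ₗ[ℂ] Mat κB // IsChannel Q},
      Dmax (biChoiState N) ((1 : Mat (ιA' × κA)) ⊗ₖ choiState Q.1)))
    - ((Real.logb 2 (Fintype.card ιA' : ℝ) : ℝ) : EReal)

/-- Rank-one projector `|v⟩⟨v|` associated with a vector. -/
def outer {ι : Type} (v : ι → ℂ) : Mat ι := Matrix.vecMulVec v (star v)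

/-- Vectorization `vec(V) := ∑ i, e_i ⊗ V e_i` of a matrix `V : ℂ^ι → ℂ^κ`. -/
def vecRect {ι κ : Type} (V : Matrix κ ι ℂ) : ι × κ → ℂ := fun p => V p.2 p.1

/-- A maximally entangled state on `ι1 × ι2`: `|φ⟩⟨φ|` with
`|φ⟩ = (1/√d) ∑ i, e_i ⊗ f_i` for orthonormal families `e`, `f`, `d = min(|ι1|,|ι2|)`. -/
def IsMaxEntangled {ι1 ι2 : Type} [Fintype ι1] [Fintype ι2]
    (Φ : Matrix (ι1 × ι2) (ι1 × ι2) ℂ) : Prop :=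
  ∃ (e : Fin (min (Fintype.card ι1) (Fintype.card ι2)) → ι1 → ℂ)
    (f : Fin (min (Fintype.card ι1) (Fintype.card ι2)) → ι2 → ℂ),
    (∀ i j, ∑ x : ι1, (starRingEnd ℂ) (e i x) * e j x = if i = j then 1 else 0) ∧
    (∀ i j, ∑ x : ι2, (starRingEnd ℂ) (f i x) * f j x = if i = j then 1 else 0) ∧
    Φ = outer (fun p => (((Real.sqrt (min (Fintype.card ι1) (Fintype.card ι2) : ℝ))⁻¹ : ℝ) : ℂ) *
      ∑ i, e i p.1 * f i p.2)

/-- Partial transpose over the second tensor factor. -/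
def ptransposeSnd {ιA ιB : Type} (ρ : Matrix (ιA × ιB) (ιA × ιB) ℂ) :
    Matrix (ιA × ιB) (ιA × ιB) ℂ :=
  Matrix.of fun p q => ρ (p.1, q.2) (q.1, p.2)

/-- A bipartite state is PPT if its partial transpose is positive semidefinite. -/
def IsPPT {ιA ιB : Type} [Fintype ιA] [Fintype ιB]
    (ρ : Matrix (ιA × ιB) (ιA × ιB) ℂ) : Prop :=
  (ptransposeSnd ρ).PosSemidef

/-- Conjugation channel `X ↦ W X Wᴴ`. -/
def conjMap {ι κ : Type} [Fintype ι] (W : Matrix κ ι ℂ) : Mat ι →ₗ[ℂ] Mat κ where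
  toFun X := W * X * Wᴴ
  map_add' X Y := by simp [Matrix.mul_add, Matrix.add_mul]
  map_smul' c X := by simp [Matrix.mul_smul, Matrix.smul_mul]

/-- The controlled unitary matrix `∑ j, |j⟩⟨j| ⊗ U_j`. -/
def ctrlU {n m : ℕ} (U : Fin n → Mat (Fin m)) : Mat (Fin n × Fin m) :=
  Matrix.of fun p q => (if p.1 = q.1 then 1 else 0) * U p.1 p.2 q.2

/-- The replacer channel `X ↦ tr(X) • γ`. -/
def replacer {ι κ : Type} [Fintype ι] (γ : Mat κ) : Mat ι →ₗ[ℂ] Mat κ where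
  toFun X := X.trace • γ
  map_add' X Y := by simp [Matrix.trace_add, add_smul]
  map_smul' c X := by simp [Matrix.trace_smul, mul_smul]

/-- The maximally mixed state `π_m = 1_m / m`. -/
def uniformState (m : ℕ) : Mat (Fin m) := ((m : ℂ))⁻¹ • (1 : Mat (Fin m))

/-- Tensor product of two linear maps of matrices. -/
def tensorL {ι1 κ1 ι2 κ2 : Type} [Fintype ι1] [DecidableEq ι1]
    (L1 : Mat ι1 →ₗ[ℂ] Mat κ1) (L2 : Mat ι2 →ₗ[ℂ] Mat κ2) :
    Mat (ι1 × ι2) →ₗ[ℂ] Mat (κ1 × κ2) where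
  toFun X := Matrix.of fun p q =>
    ∑ i1 : ι1, ∑ j1 : ι1,
      L1 (Matrix.single i1 j1 1) p.1 q.1 *
        L2 (Matrix.of fun i2 j2 => X (i1, i2) (j1, j2)) p.2 q.2
  map_add' X Y := by
    ext p q
    have h : ∀ i1 j1 : ι1,
        (Matrix.of fun i2 j2 => X (i1, i2) (j1, j2) + Y (i1, i2) (j1, j2)) =
          (Matrix.of fun i2 j2 => X (i1, i2) (j1, j2)) +
            (Matrix.of fun i2 j2 => Y (i1, i2) (j1, j2)) := by
      intro i1 j1; ext i2 j2; simp
    simp only [Matrix.add_apply, Matrix.of_apply, h, map_add, mul_add,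
      Finset.sum_add_distrib]
  map_smul' c X := by
    ext p q
    have h : ∀ i1 j1 : ι1,
        (Matrix.of fun i2 j2 => c * X (i1, i2) (j1, j2)) =
          c • (Matrix.of fun i2 j2 => X (i1, i2) (j1, j2)) := by
      intro i1 j1; ext i2 j2; simp
    simp only [Matrix.smul_apply, smul_eq_mul, Matrix.of_apply, RingHom.id_apply, h,
      LinearMap.map_smul]
    rw [Finset.mul_sum]
    refine Finset.sum_congr rfl fun i1 _ => ?_
    rw [Finset.mul_sum]
    refine Finset.sum_congr rfl fun j1 _ => ?_
    ring


/-- Square root of a positive semidefinite matrix (junk value `0` otherwise). -/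
def matSqrt {ι : Type} [Fintype ι] [DecidableEq ι] (M : Mat ι) : Mat ι :=
  letI := Classical.dec M.PosSemidef
  if h : M.PosSemidef then
    (h.1.eigenvectorUnitary : Mat ι) * diagonal ((↑) ∘ (h.1.eigenvalues · |>.sqrt)) *
      (star h.1.eigenvectorUnitary : Mat ι)
  else 0

/-- Trace norm `‖X‖₁ = tr √(XᴴX)`. -/
def traceNorm {ι : Type} [Fintype ι] [DecidableEq ι] (X : Mat ι) : ℝ :=
  (matSqrt (Xᴴ * X)).trace.re

/-- Fidelity `F(ρ,σ) = ‖√ρ√σ‖₁²`. -/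
def fidelity {ι : Type} [Fintype ι] [DecidableEq ι] (ρ σ : Mat ι) : ℝ :=
  (traceNorm (matSqrt ρ * matSqrt σ)) ^ 2

/-- Purified distance `P(ρ,σ) = √(1 − F(ρ,σ))`. -/
def purifiedDist {ι : Type} [Fintype ι] [DecidableEq ι] (ρ σ : Mat ι) : ℝ :=
  Real.sqrt (1 - fidelity ρ σ)

/-- Purified channel distance `P[N,M] = sup over states ψ of P((id⊗N)ψ, (id⊗M)ψ)`. -/
def purifiedChannelDist {ι κ : Type} [Fintype ι] [DecidableEq ι] [Fintype κ] [DecidableEq κ]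
    (L1 L2 : Mat ι →ₗ[ℂ] Mat κ) : ℝ :=
  ⨆ ψ : {ψ : Matrix (ι × ι) (ι × ι) ℂ // IsState ψ},
    purifiedDist (tensorL (LinearMap.id : Mat ι →ₗ[ℂ] Mat ι) L1 ψ.1)
      (tensorL (LinearMap.id : Mat ι →ₗ[ℂ] Mat ι) L2 ψ.1)

/-- Diamond norm `‖L‖◊ = sup over states ρ on R⊗in (R ≃ in) of ‖(id⊗L)ρ‖₁`. -/
def diamondNorm {ι κ : Type} [Fintype ι] [DecidableEq ι] [Fintype κ] [DecidableEq κ]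
    (L : Mat ι →ₗ[ℂ] Mat κ) : ℝ :=
  ⨆ ρ : {ρ : Matrix (ι × ι) (ι × ι) ℂ // IsState ρ},
    traceNorm (tensorL (LinearMap.id : Mat ι →ₗ[ℂ] Mat ι) L ρ.1)

/-- `−log₂ t`, as an extended real which is `+∞` for `t ≤ 0`. -/
def negLogE (t : ℝ) : EReal := if t ≤ 0 then ⊤ else ((-Real.logb 2 t : ℝ) : EReal)

/-- Hypothesis-testing relative entropy
`D_H^ε(ρ‖σ) = −log₂ inf{tr(Λσ) : 0 ≤ Λ ≤ 1, tr(Λρ) ≥ 1−ε}`. -/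
def DH {ι : Type} [Fintype ι] [DecidableEq ι] (ε : ℝ) (ρ σ : Mat ι) : EReal :=
  negLogE (sInf {t : ℝ | ∃ Λ : Mat ι, Λ.PosSemidef ∧ ((1 : Mat ι) - Λ).PosSemidef ∧
    1 - ε ≤ ((Λ * ρ).trace).re ∧ t = ((Λ * σ).trace).re})

/-- Channel hypothesis-testing relative entropy
`D_H^ε[N‖M] = sup over states ψ of D_H^ε((id⊗N)ψ‖(id⊗M)ψ)`. -/
def DHchan {ι κ : Type} [Fintype ι] [DecidableEq ι] [Fintype κ] [DecidableEq κ]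
    (ε : ℝ) (L1 L2 : Mat ι →ₗ[ℂ] Mat κ) : EReal :=
  ⨆ ψ : {ψ : Matrix (ι × ι) (ι × ι) ℂ // IsState ψ},
    DH ε (tensorL (LinearMap.id : Mat ι →ₗ[ℂ] Mat ι) L1 ψ.1)
      (tensorL (LinearMap.id : Mat ι →ₗ[ℂ] Mat ι) L2 ψ.1)

/-- Channel max-relative entropy `D_∞[N‖M] = D_∞(Φ^N‖Φ^M)`. -/
def DmaxChan {ι κ : Type} [Fintype ι] [DecidableEq ι] [Fintype κ]
    (L1 L2 : Mat ι →ₗ[ℂ] Mat κ) : EReal :=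
  Dmax (choiState L1) (choiState L2)

/-- Smoothed channel max-relative entropy
`D_∞^ε[N‖M] = inf{D_∞[Ñ‖M] : Ñ a channel with (1/2)P[N,Ñ] ≤ ε}`. -/
def DmaxChanSmooth {ι κ : Type} [Fintype ι] [DecidableEq ι] [Fintype κ] [DecidableEq κ]
    (ε : ℝ) (L1 L2 : Mat ι →ₗ[ℂ] Mat κ) : EReal :=
  ⨅ Nt : {Nt : Mat ι →ₗ[ℂ] Mat κ //
      IsChannel Nt ∧ 2⁻¹ * purifiedChannelDist L1 Nt ≤ ε},
    DmaxChan Nt.1 L2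

/-- A quantum superchannel: `Θ(N) = post ∘ (id_E ⊗ N) ∘ pre` for channels `pre`, `post`
and a finite-dimensional memory `E`. -/
structure Superchannel (ι1 κ1 ι2 κ2 : Type) [Fintype ι1] [DecidableEq ι1]
    [Fintype κ1] [DecidableEq κ1] [Fintype ι2] [DecidableEq ι2]
    [Fintype κ2] [DecidableEq κ2] where
  e : ℕ
  pre : Mat ι2 →ₗ[ℂ] Mat (Fin e × ι1)
  post : Mat (Fin e × κ1) →ₗ[ℂ] Mat κ2
  pre_channel : IsChannel pre
  post_channel : IsChannel post

/-- Action of a superchannel on a linear map. -/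
def Superchannel.apply {ι1 κ1 ι2 κ2 : Type} [Fintype ι1] [DecidableEq ι1]
    [Fintype κ1] [DecidableEq κ1] [Fintype ι2] [DecidableEq ι2]
    [Fintype κ2] [DecidableEq κ2] (Θ : Superchannel ι1 κ1 ι2 κ2)
    (L : Mat ι1 →ₗ[ℂ] Mat κ1) : Mat ι2 →ₗ[ℂ] Mat κ2 :=
  Θ.post ∘ₗ (tensorL (LinearMap.id : Mat (Fin Θ.e) →ₗ[ℂ] Mat (Fin Θ.e)) L) ∘ₗ Θ.pre


/-- A conditional Gibbs-preserving superchannel (distillation direction): it maps every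
conditionally thermalizing channel `T^β ⊗ Q̃` to a conditionally uniformly mixing channel
`R^π_m ⊗ Q̃'` for some side channel `Q̃'`. -/
def IsCGPSdist {a' b' a b m d' d : ℕ} (γ : Mat (Fin a))
    (Θ : Superchannel (Fin a' × Fin b') (Fin a × Fin b) (Fin m × Fin d') (Fin m × Fin d)) :
    Prop :=
  ∀ Qt : Mat (Fin b') →ₗ[ℂ] Mat (Fin b), IsChannel Qt →
    ∃ Qt' : Mat (Fin d') →ₗ[ℂ] Mat (Fin d), IsChannel Qt' ∧
      Θ.apply (tensorL (replacer γ) Qt) = tensorL (replacer (uniformState m)) Qt'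

/-- A conditional Gibbs-preserving superchannel (formation direction): it maps every
conditionally uniformly mixing channel `R^π_m ⊗ Q̃` to a conditionally thermalizing channel
`T^β ⊗ Q̃'` for some side channel `Q̃'`. -/
def IsCGPScost {a' b' a b m d' d : ℕ} (γ : Mat (Fin a))
    (Θ : Superchannel (Fin m × Fin d') (Fin m × Fin d) (Fin a' × Fin b') (Fin a × Fin b)) :
    Prop :=
  ∀ Qt : Mat (Fin d') →ₗ[ℂ] Mat (Fin d), IsChannel Qt →
    ∃ Qt' : Mat (Fin b') →ₗ[ℂ] Mat (Fin b), IsChannel Qt' ∧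
      Θ.apply (tensorL (replacer (uniformState m)) Qt) = tensorL (replacer γ) Qt'

/-- One-shot conditional athermality distillation yield `Dist^{(1,ε)}(N, T^β)`:
the worst case over side channels `Q` of the largest `log₂ m` such that some conditional
Gibbs-preserving superchannel converts `(N, T^β⊗Q)` into `(id_m⊗Q', R^π_m⊗Q')`
within purified channel distance `ε`. -/
def DistOneShot {a' b' a b : ℕ} (N : Mat (Fin a' × Fin b') →ₗ[ℂ] Mat (Fin a × Fin b))
    (γ : Mat (Fin a)) (ε : ℝ) : EReal :=
  ⨅ Q : {Q : Mat (Fin b') →ₗ[ℂ] Mat (Fin b) // IsChannel Q},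
    sSup {x : EReal | ∃ m d' d : ℕ, ∃ Q' : Mat (Fin d') →ₗ[ℂ] Mat (Fin d),
      ∃ Θ : Superchannel (Fin a' × Fin b') (Fin a × Fin b) (Fin m × Fin d') (Fin m × Fin d),
        IsChannel Q' ∧ IsCGPSdist γ Θ ∧
        Θ.apply (tensorL (replacer γ) Q.1) = tensorL (replacer (uniformState m)) Q' ∧
        purifiedChannelDist
          (tensorL (LinearMap.id : Mat (Fin m) →ₗ[ℂ] Mat (Fin m)) Q') (Θ.apply N) ≤ ε ∧
        x = ((Real.logb 2 (m : ℝ) : ℝ) : EReal)}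

/-- One-shot conditional athermality formation cost `Cost^{(1,ε)}(N, T^β)`:
the best case over side channels `Q` of the least `log₂ m` such that some conditional
Gibbs-preserving superchannel converts `(id_m⊗Q'', R^π_m⊗Q'')` into `(N, T^β⊗Q)`
within purified channel distance `ε`. -/
def CostOneShot {a' b' a b : ℕ} (N : Mat (Fin a' × Fin b') →ₗ[ℂ] Mat (Fin a × Fin b))
    (γ : Mat (Fin a)) (ε : ℝ) : EReal :=
  ⨅ Q : {Q : Mat (Fin b') →ₗ[ℂ] Mat (Fin b) // IsChannel Q},
    sInf {x : EReal | ∃ m d' d : ℕ, ∃ Q'' : Mat (Fin d') →ₗ[ℂ] Mat (Fin d),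
      ∃ Θ : Superchannel (Fin m × Fin d') (Fin m × Fin d) (Fin a' × Fin b') (Fin a × Fin b),
        IsChannel Q'' ∧ IsCGPScost γ Θ ∧
        Θ.apply (tensorL (replacer (uniformState m)) Q'') = tensorL (replacer γ) Q.1 ∧
        purifiedChannelDist N
          (Θ.apply (tensorL (LinearMap.id : Mat (Fin m) →ₗ[ℂ] Mat (Fin m)) Q'')) ≤ ε ∧
        x = ((Real.logb 2 (m : ℝ) : ℝ) : EReal)}


/-- A bipartite channel `N : A'B' → AB` is no-signaling (semicausal) from `A'` to `B`:
`tr_A ∘ N = tr_{A'} ⊗ Q` for some channel `Q : B' → B`. -/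
def NoSignalFstToSnd {ιA' ιB' κA κB : Type} [Fintype ιA'] [DecidableEq ιA']
    [Fintype ιB'] [DecidableEq ιB'] [Fintype κA] [Fintype κB]
    (N : Mat (ιA' × ιB') →ₗ[ℂ] Mat (κA × κB)) : Prop :=
  ∃ Q : Mat ιB' →ₗ[ℂ] Mat κB, IsChannel Q ∧
    ∀ X : Mat (ιA' × ιB'), trFst (N X) = Q (trFst X)

end


section AuxLemmas

open Matrix
open scoped ComplexOrder

variable {n : Type} [Fintype n]

private lemma herm_dot {G : Mat n} (hG : G.IsHermitian) (x y : n → ℂ) :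
    star x ⬝ᵥ G *ᵥ y = star (star y ⬝ᵥ G *ᵥ x) := by
  have h1 : star (star y ⬝ᵥ G *ᵥ x) = star (G *ᵥ x) ⬝ᵥ y := by
    rw [star_dotProduct, star_star]
  calc star x ⬝ᵥ G *ᵥ y = (star x ᵥ* G) ⬝ᵥ y := dotProduct_mulVec _ _ _
    _ = (star x ᵥ* Gᴴ) ⬝ᵥ y := by rw [hG.eq]
    _ = star (G *ᵥ x) ⬝ᵥ y := by rw [star_mulVec]
    _ = star (star y ⬝ᵥ G *ᵥ x) := h1.symm

private lemma vecMulVec_mulVec' (v u x : n → ℂ) :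
    vecMulVec v u *ᵥ x = (u ⬝ᵥ x) • v := by
  funext i
  simp only [mulVec, dotProduct, vecMulVec_apply, Pi.smul_apply, smul_eq_mul]
  rw [Finset.sum_mul]
  exact Finset.sum_congr rfl fun j _ => by ring

private lemma psd_realSmul {M : Mat n} (hM : M.PosSemidef) {c : ℝ} (hc : 0 ≤ c) :
    ((c : ℂ) • M).PosSemidef := by
  refine PosSemidef.of_dotProduct_mulVec_nonneg ?_ ?_
  · have : ((c : ℂ) • M)ᴴ = (c : ℂ) • M := by
      rw [conjTranspose_smul, hM.1.eq, Complex.star_def, Complex.conj_ofReal]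
    exact this
  · intro x
    rw [smul_mulVec, dotProduct_smul, smul_eq_mul]
    exact mul_nonneg (by exact_mod_cast hc) (hM.dotProduct_mulVec_nonneg x)

private lemma psd_sub_of_le {G : Mat n} (hG : G.PosSemidef) (w : n → ℂ)
    {t l : ℝ} (hT : star w ⬝ᵥ G *ᵥ w = (t : ℂ)) (ht : 0 < t) (hl : t ≤ l) :
    ((l : ℂ) • G - vecMulVec (G *ᵥ w) (star (G *ᵥ w))).PosSemidef := by
  have ht0 : ((t : ℂ)) ≠ 0 := by exact_mod_cast ht.ne'
  refine PosSemidef.of_dotProduct_mulVec_nonneg ?_ ?_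
  · have h1 : ((l : ℂ) • G)ᴴ = (l : ℂ) • G := by
      rw [conjTranspose_smul, hG.1.eq, Complex.star_def, Complex.conj_ofReal]
    have h2 : (vecMulVec (G *ᵥ w) (star (G *ᵥ w)))ᴴ = vecMulVec (G *ᵥ w) (star (G *ᵥ w)) := by
      ext i j
      simp only [conjTranspose_apply, vecMulVec_apply, Pi.star_apply, star_mul', star_star]
      ring
    have : ((l : ℂ) • G - vecMulVec (G *ᵥ w) (star (G *ᵥ w)))ᴴ
        = (l : ℂ) • G - vecMulVec (G *ᵥ w) (star (G *ᵥ w)) := by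
      rw [conjTranspose_sub, h1, h2]
    exact this
  · intro x
    set q : ℂ := star x ⬝ᵥ G *ᵥ x with hq
    set α : ℂ := star w ⬝ᵥ G *ᵥ x with hα
    have hxw : star x ⬝ᵥ G *ᵥ w = star α := by rw [herm_dot hG.1]
    have hvx : star (G *ᵥ w) ⬝ᵥ x = α := by
      rw [star_mulVec, hG.1.eq, ← dotProduct_mulVec]
    have hval : star x ⬝ᵥ ((l : ℂ) • G - vecMulVec (G *ᵥ w) (star (G *ᵥ w))) *ᵥ x
        = (l : ℂ) * q - α * star α := by
      rw [sub_mulVec, dotProduct_sub, smul_mulVec, dotProduct_smul,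
        vecMulVec_mulVec', dotProduct_smul, hvx, hxw]
      simp only [smul_eq_mul, ← hq]
    rw [hval]
    set c : ℂ := α / (t : ℂ) with hc
    have key : 0 ≤ star (x - c • w) ⬝ᵥ G *ᵥ (x - c • w) := hG.dotProduct_mulVec_nonneg _
    have hexp : star (x - c • w) ⬝ᵥ G *ᵥ (x - c • w)
        = q - c * star α - star c * α + star c * (c * (t : ℂ)) := by
      rw [star_sub, star_smul, mulVec_sub, mulVec_smul, sub_dotProduct, dotProduct_sub,
        dotProduct_sub, smul_dotProduct, smul_dotProduct, dotProduct_smul, dotProduct_smul,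
        hxw, hT, ← hα, ← hq]
      simp only [smul_eq_mul]
      ring
    have hcs : 0 ≤ q - α * star α / (t : ℂ) := by
      have heq : q - c * star α - star c * α + star c * (c * (t : ℂ))
          = q - α * star α / (t : ℂ) := by
        rw [hc, star_div₀]
        simp only [Complex.star_def, Complex.conj_ofReal]
        field_simp
        ring
      rw [hexp, heq] at key
      exact key
    have h2 : 0 ≤ (t : ℂ) * q - α * star α := by
      have hh := mul_nonneg (by exact_mod_cast ht.le : (0 : ℂ) ≤ (t : ℂ)) hcs
      have heq : (t : ℂ) * (q - α * star α / (t : ℂ)) = (t : ℂ) * q - α * star α := by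
        field_simp
      rwa [heq] at hh
    have h3 : 0 ≤ ((l : ℂ) - (t : ℂ)) * q := by
      refine mul_nonneg ?_ (hG.dotProduct_mulVec_nonneg x)
      rw [sub_nonneg]
      exact_mod_cast hl
    have heq : (l : ℂ) * q - α * star α
        = ((l : ℂ) - (t : ℂ)) * q + ((t : ℂ) * q - α * star α) := by ring
    rw [heq]
    exact add_nonneg h3 h2

private lemma le_of_psd_sub {G : Mat n} (w : n → ℂ) {t l : ℝ}
    (hT : star w ⬝ᵥ G *ᵥ w = (t : ℂ)) (ht : 0 < t)
    (h : ((l : ℂ) • G - vecMulVec (G *ᵥ w) (star (G *ᵥ w))).PosSemidef) : t ≤ l := by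
  have h2 := h.dotProduct_mulVec_nonneg w
  have hvw : star (G *ᵥ w) ⬝ᵥ w = (t : ℂ) := by
    rw [star_dotProduct, hT]
    exact Complex.conj_ofReal t
  have hval : star w ⬝ᵥ ((l : ℂ) • G - vecMulVec (G *ᵥ w) (star (G *ᵥ w))) *ᵥ w
      = (l : ℂ) * (t : ℂ) - (t : ℂ) * (t : ℂ) := by
    rw [sub_mulVec, dotProduct_sub, smul_mulVec, dotProduct_smul,
      vecMulVec_mulVec', dotProduct_smul, hvw, hT]
    simp only [smul_eq_mul]
  rw [hval, show (l : ℂ) * (t : ℂ) - (t : ℂ) * (t : ℂ) = ((l * t - t * t : ℝ) : ℂ) by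
    push_cast; ring] at h2
  have h3 : (0 : ℝ) ≤ l * t - t * t := by exact_mod_cast h2
  nlinarith

private lemma kron_one_posDef {m k : Type} [Fintype m] [DecidableEq m] [Fintype k]
    {γ : Mat k} (hγ : γ.PosDef) : ((1 : Mat m) ⊗ₖ γ).PosDef := by
  have hform : ∀ x : m × k → ℂ, star x ⬝ᵥ ((1 : Mat m) ⊗ₖ γ) *ᵥ x
      = ∑ i : m, star (fun j => x (i, j)) ⬝ᵥ γ *ᵥ (fun j => x (i, j)) := by
    intro x
    simp only [mulVec, dotProduct, Fintype.sum_prod_type, kroneckerMap_apply, one_apply,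
      Pi.star_apply]
    refine Finset.sum_congr rfl fun i _ => Finset.sum_congr rfl fun j _ => ?_
    congr 1
    rw [Finset.sum_eq_single i]
    · simp
    · intro b _ hb
      simp [Ne.symm hb]
    · intro hcon
      exact absurd (Finset.mem_univ i) hcon
  refine PosDef.of_dotProduct_mulVec_pos ?_ ?_
  · have : ((1 : Mat m) ⊗ₖ γ)ᴴ = (1 : Mat m) ⊗ₖ γ := by
      ext p q
      obtain ⟨i, j⟩ := p
      obtain ⟨k', l⟩ := q
      simp only [conjTranspose_apply, kroneckerMap_apply, one_apply, Pi.star_apply, star_mul']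
      rw [← hγ.1.apply l j]
      by_cases hik : k' = i
      · subst hik; simp
      · simp [if_neg hik, if_neg (Ne.symm hik)]
    exact this
  · intro x hx
    rw [hform]
    have hex : ∃ i : m, (fun j => x (i, j)) ≠ 0 := by
      by_contra hcon
      push_neg at hcon
      apply hx
      funext p
      obtain ⟨i, j⟩ := p
      exact congrFun (hcon i) j
    obtain ⟨i, hi⟩ := hex
    refine Finset.sum_pos' (fun i' _ => hγ.posSemidef.dotProduct_mulVec_nonneg _) ⟨i, Finset.mem_univ i, ?_⟩
    exact hγ.dotProduct_mulVec_pos hi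

end AuxLemmas

/-- For an isometry `V : ℂ^{|A'|} → ℂ^{|A|}` with isometry channel
`X ↦ VXVᴴ` of Choi state `Φ^V = (1/|A'|)·vec(V)vec(V)ᴴ`, and a positive definite state `γ`
on `ℂ^{|A|}`, the max-relative entropy to the Choi state `π_{A'} ⊗ γ` of the absolutely
thermal channel `T(X) = tr(X)γ` equals `D_∞(Φ^V ‖ π_{A'} ⊗ γ) = log₂ tr(γ⁻¹ V Vᴴ)`. -/
theorem dmax_isometry_choi_vs_thermal_choi
    {a' a : ℕ} [NeZero a'] [NeZero a] (V : Matrix (Fin a) (Fin a') ℂ)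
    (hV : Vᴴ * V = 1) (γ : Mat (Fin a)) (hγ : IsState γ) (hγpd : γ.PosDef) :
    Dmax (((a' : ℂ))⁻¹ • outer (vecRect V))
        ((((a' : ℂ))⁻¹ • (1 : Mat (Fin a'))) ⊗ₖ γ) =
      ((Real.logb 2 ((γ⁻¹ * (V * Vᴴ)).trace.re) : ℝ) : EReal) := by
  classical
  have ha'pos : 0 < a' := Nat.pos_of_ne_zero (NeZero.ne a')
  have ha' : (0 : ℝ) < (a' : ℝ) := by exact_mod_cast ha'pos
  have ha'C : ((a' : ℂ)) ≠ 0 := by exact_mod_cast (NeZero.ne a')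
  set v : Fin a' × Fin a → ℂ := vecRect V with hvdef
  set w : Fin a' × Fin a → ℂ := vecRect (γ⁻¹ * V) with hwdef
  set G : Mat (Fin a' × Fin a) := (1 : Mat (Fin a')) ⊗ₖ γ with hGdef
  have hdet : IsUnit γ.det := hγpd.det_pos.ne'.isUnit
  have hγγ : γ * γ⁻¹ = 1 := Matrix.mul_nonsing_inv _ hdet
  have hfix : γ * (γ⁻¹ * V) = V := by rw [← Matrix.mul_assoc, hγγ, Matrix.one_mul]
  have hγinv : (γ⁻¹).IsHermitian := hγpd.1.inv
  have hGw : G *ᵥ w = v := by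
    funext p
    obtain ⟨i, j⟩ := p
    rw [hvdef, hwdef, hGdef]
    simp only [mulVec, dotProduct, kroneckerMap_apply, one_apply, Fintype.sum_prod_type,
      vecRect]
    rw [Finset.sum_eq_single i]
    · simp only [eq_self_iff_true, if_true, one_mul]
      rw [show (∑ l : Fin a, γ j l * (γ⁻¹ * V) l i) = (γ * (γ⁻¹ * V)) j i from
        (Matrix.mul_apply).symm, hfix]
    · intro b _ hb
      simp [if_neg (Ne.symm hb)]
    · intro hcon
      exact absurd (Finset.mem_univ i) hcon
  have hGpd : G.PosDef := kron_one_posDef hγpd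
  have hwne : w ≠ 0 := by
    intro h0
    have hγV : γ⁻¹ * V = 0 := by
      ext l k
      have := congrFun h0 (k, l)
      rw [hwdef] at this
      simpa [vecRect] using this
    have hV0 : V = 0 := by
      have h1 := hfix.symm
      rw [hγV, Matrix.mul_zero] at h1
      exact h1
    rw [hV0] at hV
    simp only [conjTranspose_zero, mul_zero] at hV
    have h00 := congrFun (congrFun hV ⟨0, ha'pos⟩) ⟨0, ha'pos⟩
    simp [Matrix.one_apply] at h00
  have hTpos : 0 < star w ⬝ᵥ G *ᵥ w := hGpd.dotProduct_mulVec_pos hwne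
  have hTval : star w ⬝ᵥ G *ᵥ w = (γ⁻¹ * (V * Vᴴ)).trace := by
    rw [hGw, hvdef, hwdef]
    have lhs_eq : (star (vecRect (γ⁻¹ * V)) ⬝ᵥ vecRect V)
        = ∑ i : Fin a', ∑ j : Fin a, ∑ l : Fin a, γ⁻¹ l j * star (V l i) * V j i := by
      simp only [dotProduct, Pi.star_apply, vecRect, Fintype.sum_prod_type, Matrix.mul_apply,
        star_sum, star_mul', Finset.sum_mul]
      refine Finset.sum_congr rfl fun i _ => Finset.sum_congr rfl fun j _ =>
        Finset.sum_congr rfl fun l _ => ?_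
      rw [show star (γ⁻¹ j l) = γ⁻¹ l j from hγinv.apply l j]
    have rhs_eq : (γ⁻¹ * (V * Vᴴ)).trace
        = ∑ l : Fin a, ∑ j : Fin a, ∑ i : Fin a', γ⁻¹ l j * star (V l i) * V j i := by
      simp only [Matrix.trace, Matrix.diag_apply, Matrix.mul_apply, conjTranspose_apply,
        Finset.mul_sum]
      refine Finset.sum_congr rfl fun l _ => Finset.sum_congr rfl fun j _ =>
        Finset.sum_congr rfl fun i _ => by ring
    rw [lhs_eq, rhs_eq]
    calc (∑ i : Fin a', ∑ j : Fin a, ∑ l : Fin a, γ⁻¹ l j * star (V l i) * V j i)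
        = ∑ i : Fin a', ∑ l : Fin a, ∑ j : Fin a, γ⁻¹ l j * star (V l i) * V j i :=
          Finset.sum_congr rfl fun i _ => Finset.sum_comm
      _ = ∑ l : Fin a, ∑ i : Fin a', ∑ j : Fin a, γ⁻¹ l j * star (V l i) * V j i :=
          Finset.sum_comm
      _ = ∑ l : Fin a, ∑ j : Fin a, ∑ i : Fin a', γ⁻¹ l j * star (V l i) * V j i :=
          Finset.sum_congr rfl fun l _ => Finset.sum_comm
  set t : ℝ := (γ⁻¹ * (V * Vᴴ)).trace.re with htdef
  have htraceRe := congrArg Complex.re hTval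
  have htpos : 0 < t := by
    rw [htdef, ← htraceRe]
    exact (Complex.pos_iff.mp hTpos).1
  have hTre : star w ⬝ᵥ G *ᵥ w = (t : ℂ) := by
    apply Complex.ext
    · rw [Complex.ofReal_re, htdef, ← htraceRe]
    · rw [Complex.ofReal_im]
      exact ((Complex.pos_iff.mp hTpos).2).symm
  have hscale : ∀ l : ℝ, ((l : ℂ) • ((((a' : ℂ))⁻¹ • (1 : Mat (Fin a'))) ⊗ₖ γ)
      - ((a' : ℂ))⁻¹ • outer v)
      = ((a' : ℂ))⁻¹ • ((l : ℂ) • G - vecMulVec (G *ᵥ w) (star (G *ᵥ w))) := by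
    intro l
    rw [hGw, hGdef, Matrix.smul_kronecker, smul_sub,
      smul_comm ((l : ℂ)) (((a' : ℂ))⁻¹) ((1 : Mat (Fin a')) ⊗ₖ γ)]
    rfl
  have hpsd_iff : ∀ M : Mat (Fin a' × Fin a),
      (((a' : ℂ))⁻¹ • M).PosSemidef ↔ M.PosSemidef := by
    intro M
    constructor
    · intro h
      have h2 := psd_realSmul h ha'.le
      rw [show (((a' : ℝ) : ℂ)) = ((a' : ℂ)) from by norm_cast, smul_smul,
        mul_inv_cancel₀ ha'C, one_smul] at h2
      exact h2
    · intro h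
      have h2 := psd_realSmul h (le_of_lt (inv_pos.mpr ha'))
      rwa [show ((((a' : ℝ))⁻¹ : ℝ) : ℂ) = ((a' : ℂ))⁻¹ from by push_cast; ring] at h2
  unfold Dmax
  apply le_antisymm
  · apply sInf_le
    refine ⟨t, htpos.le, ?_, rfl⟩
    rw [hscale t]
    exact (hpsd_iff _).mpr (psd_sub_of_le hGpd.posSemidef w hTre htpos le_rfl)
  · apply le_sInf
    rintro x ⟨l, hl0, hpsd, rfl⟩
    rw [hscale l] at hpsd
    have hle : t ≤ l := le_of_psd_sub w hTre htpos ((hpsd_iff _).mp hpsd)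
    exact EReal.coe_le_coe_iff.mpr (Real.logb_le_logb_of_le one_lt_two htpos hle)
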